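/- For every natural number n ≥ 1, the path graph on n vertices is Perrin cordial. -/
import Mathlib


/-- The reindexed Perrin sequence: `P 0 = 0`, `P 1 = 3`, `P 2 = 0`, `P 3 = 2`,
and `P n = P (n-2) + P (n-3)` thereafter
(so `P 4 = 3`, `P 5 = 2`, `P 6 = 5`, ...). -/
def perrin : ℕ → ℕ
  | 0 => 0
  | 1 => 3
  | 2 => 0
  | 3 => 2
  | n + 4 => perrin (n + 2) + perrin (n + 1)

/-- The induced edge label: `f` assigns to each vertex the index of a Perrin number,
and an edge `uv` gets the label `(P (f u) + P (f v)) mod 2`. -/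
def perrinEdgeLabel {V : Type*} (f : V → ℕ) : Sym2 V → ℕ :=
  Sym2.lift ⟨fun u v => (perrin (f u) + perrin (f v)) % 2, fun u v => by simp [Nat.add_comm]⟩

/-- `eCount G f i` is the number of edges of `G` whose induced label under `f` is `i`. -/
noncomputable def eCount {V : Type*} (G : SimpleGraph V) (f : V → ℕ) (i : ℕ) : ℕ :=
  {e | e ∈ G.edgeSet ∧ perrinEdgeLabel f e = i}.ncard

/-- A finite simple graph `G` on `N` vertices is Perrin cordial if there is an injective
labeling of its vertices by indices in `{0, 1, ..., N}` such that the numbers of edges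
with induced label `0` and `1` differ by at most `1`. -/
def IsPerrinCordial {V : Type*} [Fintype V] (G : SimpleGraph V) : Prop :=
  ∃ f : V → Fin (Fintype.card V + 1), Function.Injective f ∧
    |(eCount G (fun v => (f v : ℕ)) 0 : ℤ) - (eCount G (fun v => (f v : ℕ)) 1 : ℤ)| ≤ 1

/-! ### Perrin parity -/

def Qf : ℕ → ℕ
  | 0 => 1 | 1 => 1 | 2 => 0 | 3 => 0 | 4 => 1 | 5 => 0 | _ => 1

lemma perrin_period (i : ℕ) : perrin (i + 8) % 2 = perrin (i + 1) % 2 := by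
  induction i using Nat.strong_induction_on with
  | _ i ih =>
    match i with
    | 0 => decide
    | 1 => decide
    | 2 => decide
    | (j+3) =>
      have h1 : perrin (j+9) % 2 = perrin (j+2) % 2 := ih (j+1) (by omega)
      have h2 : perrin (j+8) % 2 = perrin (j+1) % 2 := ih j (by omega)
      have e1 : perrin (j + 3 + 8) = perrin (j + 9) + perrin (j + 8) := rfl
      have e2 : perrin (j + 3 + 1) = perrin (j + 2) + perrin (j + 1) := rfl
      rw [e1, e2]
      omega

lemma perrin_mod7 (i : ℕ) (h : 1 ≤ i) : perrin i % 2 = Qf (i % 7) := by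
  induction i using Nat.strong_induction_on with
  | _ i ih =>
    match i, h with
    | 1, _ => decide
    | 2, _ => decide
    | 3, _ => decide
    | 4, _ => decide
    | 5, _ => decide
    | 6, _ => decide
    | 7, _ => decide
    | (j+8), _ =>
      have h1 := perrin_period j
      have h2 := ih (j+1) (by omega) (by omega)
      have h3 : (j + 8) % 7 = (j + 1) % 7 := by omega
      rw [h3, ← h2, h1]

/-! ### Tables -/

def patL : ℕ → List ℕ
  | 0 => [0,1,0,1,0,1,1,1,1,1,1,0,0,0]
  | _ => [1,0,1,0,1,0,0,0,0,1,1,1,1,1]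

def pat (x j : ℕ) : ℕ := (patL x).getD j 0

def TL : ℕ → ℕ → List ℕ
  | 0, 0 => [2, 1, 3, 4, 5, 6, 7, 8, 11, 13, 14, 9, 10, 12]
  | 0, _ => [1, 2, 4, 3, 6, 5, 9, 10, 12, 7, 8, 11, 13, 14]
  | 1, 0 => [1, 3, 2, 5, 4, 6, 7, 10, 12, 13, 14, 8, 9, 11]
  | 1, _ => [3, 1, 5, 2, 6, 4, 8, 9, 11, 7, 10, 12, 13, 14]
  | 2, 0 => [1, 2, 3, 4, 7, 5, 6, 9, 11, 12, 13, 8, 10, 14]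
  | 2, _ => [2, 1, 4, 3, 5, 7, 8, 10, 14, 6, 9, 11, 12, 13]
  | 3, 0 => [2, 1, 6, 3, 7, 4, 5, 8, 10, 11, 12, 9, 13, 14]
  | 3, _ => [1, 2, 3, 6, 4, 7, 9, 13, 14, 5, 8, 10, 11, 12]
  | 4, 0 => [1, 2, 5, 3, 6, 4, 7, 9, 10, 11, 14, 8, 12, 13]
  | 4, _ => [2, 1, 3, 5, 4, 6, 8, 12, 13, 7, 9, 10, 11, 14]
  | 5, 0 => [4, 1, 5, 2, 7, 3, 6, 8, 9, 10, 13, 11, 12, 14]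
  | 5, _ => [1, 4, 2, 5, 3, 7, 11, 12, 14, 6, 8, 9, 10, 13]
  | 6, 0 => [3, 1, 4, 2, 6, 5, 7, 8, 9, 12, 14, 10, 11, 13]
  | _, _ => [1, 3, 2, 4, 5, 6, 10, 11, 13, 7, 8, 9, 12, 14]

def off (r x j : ℕ) : ℕ := (TL r x).getD j 0

lemma off_bounds : ∀ r < 7, ∀ x < 2, ∀ j < 14, 1 ≤ off r x j ∧ off r x j ≤ 14 := by decide
lemma off_inj : ∀ r < 7, ∀ x < 2, ∀ j < 14, ∀ k < 14, off r x j = off r x k → j = k := by decide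
lemma off_par : ∀ r < 7, ∀ x < 2, ∀ j < 14, Qf ((r + off r x j) % 7) = pat x j := by decide

lemma pat_count : ∀ p < 2, ∀ i < 2,
    ((Finset.range 14).filter (fun j =>
      (if j = 0 then (p + pat (1-p) 0) % 2 else (pat (1-p) (j-1) + pat (1-p) j) % 2) = i)).card
      = 7 := by
  decide

/-! ### Counting -/

def cnt (g : ℕ → ℕ) (m i : ℕ) : ℕ :=
  ((Finset.range m).filter (fun k => (perrin (g k) + perrin (g (k+1))) % 2 = i)).card

lemma filter_range_add (p : ℕ → Prop) [DecidablePred p] (a b : ℕ) :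
    ((Finset.range (a+b)).filter p).card
      = ((Finset.range a).filter p).card + ((Finset.range b).filter (fun j => p (a + j))).card := by
  induction b with
  | zero => simp
  | succ b ih =>
    rw [show a + (b+1) = (a+b)+1 from rfl, Finset.range_add_one, Finset.range_add_one,
      Finset.filter_insert, Finset.filter_insert]
    by_cases h : p (a + b)
    · rw [if_pos h, if_pos h, Finset.card_insert_of_notMem (by simp),
        Finset.card_insert_of_notMem (by simp), ih]
      omega
    · rw [if_neg h, if_neg h, ih]

def Good (n : ℕ) : Prop :=
  ∃ g : ℕ → ℕ, (∀ k, k < n → 1 ≤ g k ∧ g k ≤ n) ∧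
    (∀ j < n, ∀ k < n, g j = g k → j = k) ∧
    cnt g (n-1) 0 ≤ cnt g (n-1) 1 + 1 ∧ cnt g (n-1) 1 ≤ cnt g (n-1) 0 + 1

/-! ### Step -/

lemma good_step (n : ℕ) (hn : 1 ≤ n) (h : Good n) : Good (n + 14) := by
  classical
  obtain ⟨g, hb, hinj, hbal0, hbal1⟩ := h
  set p := perrin (g (n-1)) % 2 with hp
  have hp2 : p < 2 := Nat.mod_lt _ (by norm_num)
  set r := n % 7 with hr
  have hr7 : r < 7 := Nat.mod_lt _ (by norm_num)
  have hx2 : 1 - p < 2 := by omega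
  set g' : ℕ → ℕ := fun k => if k < n then g k else n + off r (1-p) (k - n) with hg'
  have hold : ∀ k, k < n → g' k = g k := by
    intro k hk; simp only [hg']; rw [if_pos hk]
  have hnew : ∀ k, n ≤ k → k < n + 14 → g' k = n + off r (1-p) (k - n) := by
    intro k hk1 hk2; simp only [hg']; rw [if_neg (by omega)]
  have hoffb : ∀ j, j < 14 → 1 ≤ off r (1-p) j ∧ off r (1-p) j ≤ 14 :=
    fun j hj => off_bounds r hr7 (1-p) hx2 j hj
  refine ⟨g', ?_, ?_, ?_⟩
  · intro k hk
    by_cases hkn : k < n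
    · rw [hold k hkn]; have := hb k hkn; omega
    · rw [hnew k (by omega) hk]; have := hoffb (k-n) (by omega); omega
  · intro j hj k hk he
    by_cases hjn : j < n <;> by_cases hkn : k < n
    · exact hinj j hjn k hkn (by rwa [hold j hjn, hold k hkn] at he)
    · rw [hold j hjn, hnew k (by omega) hk] at he
      have := hb j hjn; have := hoffb (k-n) (by omega); omega
    · rw [hnew j (by omega) hj, hold k hkn] at he
      have := hb k hkn; have := hoffb (j-n) (by omega); omega
    · rw [hnew j (by omega) hj, hnew k (by omega) hk] at he
      have := off_inj r hr7 (1-p) hx2 (j-n) (by omega) (k-n) (by omega) (by omega)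
      omega
  · -- counts
    have parnew : ∀ j, j < 14 → perrin (n + off r (1-p) j) % 2 = pat (1-p) j := by
      intro j hj
      have h1 := hoffb j hj
      rw [perrin_mod7 _ (by omega),
        show (n + off r (1-p) j) % 7 = (r + off r (1-p) j) % 7 by omega,
        off_par r hr7 (1-p) hx2 j hj]
    have main : ∀ i, i < 2 → cnt g' (n + 14 - 1) i = cnt g (n-1) i + 7 := by
      intro i hi
      have hsplit : cnt g' (n + 14 - 1) i
          = ((Finset.range (n-1)).filter
              (fun k => (perrin (g' k) + perrin (g' (k+1))) % 2 = i)).card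
            + ((Finset.range 14).filter
              (fun j => (perrin (g' (n-1+j)) + perrin (g' (n-1+j+1))) % 2 = i)).card := by
        rw [show n + 14 - 1 = (n-1) + 14 by omega]
        exact filter_range_add _ (n-1) 14
      have hfirst : ((Finset.range (n-1)).filter
          (fun k => (perrin (g' k) + perrin (g' (k+1))) % 2 = i)).card = cnt g (n-1) i := by
        apply congrArg
        apply Finset.filter_congr
        intro k hk
        simp only [Finset.mem_range] at hk
        rw [hold k (by omega), hold (k+1) (by omega)]
      have hsecond : ((Finset.range 14).filter
          (fun j => (perrin (g' (n-1+j)) + perrin (g' (n-1+j+1))) % 2 = i)).card = 7 := by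
        rw [Finset.filter_congr (q := fun j =>
            (if j = 0 then (p + pat (1-p) 0) % 2 else (pat (1-p) (j-1) + pat (1-p) j) % 2) = i) ?_]
        · exact pat_count p hp2 i hi
        · intro j hj
          simp only [Finset.mem_range] at hj
          have e2 : perrin (g' (n-1+j+1)) % 2 = pat (1-p) j := by
            rw [hnew (n-1+j+1) (by omega) (by omega),
              show n-1+j+1-n = j by omega]
            exact parnew j hj
          show (perrin (g' (n-1+j)) + perrin (g' (n-1+j+1))) % 2 = i ↔
            (if j = 0 then (p + pat (1-p) 0) % 2 else (pat (1-p) (j-1) + pat (1-p) j) % 2) = i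
          rcases Nat.eq_zero_or_pos j with h0 | h0
          · subst h0
            have e1 : perrin (g' (n-1+0)) % 2 = p := by
              rw [hold (n-1+0) (by omega)]; exact hp.symm
            rw [if_pos rfl]
            omega
          · have e1 : perrin (g' (n-1+j)) % 2 = pat (1-p) (j-1) := by
              rw [hnew (n-1+j) (by omega) (by omega), show n-1+j-n = j-1 by omega]
              exact parnew (j-1) (by omega)
            rw [if_neg (by omega)]
            omega
      rw [hsplit, hfirst, hsecond]
    have m0 := main 0 (by norm_num)
    have m1 := main 1 (by norm_num)
    constructor <;> omega

def baseL : ℕ → List ℕ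
  | 5 => [1, 2, 3, 5, 4]
  | 6 => [1, 2, 3, 4, 6, 5]
  | 7 => [1, 2, 3, 4, 6, 7, 5]
  | 9 => [1, 2, 3, 4, 5, 9, 6, 7, 8]
  | 11 => [1, 2, 3, 4, 5, 6, 7, 8, 11, 9, 10]
  | 12 => [1, 2, 3, 4, 5, 6, 7, 8, 9, 10, 12, 11]
  | 13 => [1, 2, 3, 4, 5, 6, 7, 8, 9, 10, 12, 11, 13]
  | 14 => [1, 2, 3, 4, 5, 6, 7, 8, 9, 10, 11, 13, 14, 12]
  | n => (List.range n).map (· + 1)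

def gb (n k : ℕ) : ℕ := (baseL n).getD k 0

lemma gb_facts : ∀ n, 1 ≤ n → n ≤ 14 →
    (∀ k < n, 1 ≤ gb n k ∧ gb n k ≤ n) ∧
    (∀ j < n, ∀ k < n, gb n j = gb n k → j = k) ∧
    cnt (gb n) (n-1) 0 ≤ cnt (gb n) (n-1) 1 + 1 ∧
    cnt (gb n) (n-1) 1 ≤ cnt (gb n) (n-1) 0 + 1 := by
  decide

lemma good_all : ∀ n, 1 ≤ n → Good n := by
  intro n
  induction n using Nat.strong_induction_on with
  | _ n ih =>
    intro hn
    by_cases h : n ≤ 14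
    · exact ⟨gb n, (gb_facts n hn h).1, (gb_facts n hn h).2.1, (gb_facts n hn h).2.2⟩
    · have := good_step (n-14) (by omega) (ih (n-14) (by omega) (by omega))
      rwa [show n - 14 + 14 = n by omega] at this

lemma eCount_path (n : ℕ) (g : ℕ → ℕ) (i : ℕ) :
    eCount (SimpleGraph.pathGraph n) (fun v => g v.val) i = cnt g (n-1) i := by
  classical
  set s : Finset ℕ :=
    (Finset.range (n-1)).filter (fun k => (perrin (g k) + perrin (g (k+1))) % 2 = i) with hs
  have hmem : ∀ k ∈ s, k + 1 < n := by
    intro k hk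
    rw [hs, Finset.mem_filter, Finset.mem_range] at hk
    omega
  set F : {k // k ∈ s} → Sym2 (Fin n) := fun k =>
    s(⟨k.1, by have := hmem k.1 k.2; omega⟩, ⟨k.1 + 1, hmem k.1 k.2⟩) with hF
  have hset : {e | e ∈ (SimpleGraph.pathGraph n).edgeSet ∧ perrinEdgeLabel (fun v => g v.val) e = i}
      = ↑(s.attach.image F) := by
    ext e
    induction e with
    | _ u v =>
      simp only [Set.mem_setOf_eq, Finset.coe_image, Set.mem_image, Finset.mem_coe,
        Finset.mem_attach, SimpleGraph.mem_edgeSet, true_and]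
      constructor
      · rintro ⟨hadj, hlab⟩
        rw [SimpleGraph.pathGraph_adj] at hadj
        have hlab' : (perrin (g u.val) + perrin (g v.val)) % 2 = i := hlab
        rcases hadj with hc | hc
        · have hmemu : u.val ∈ s := by
            rw [hs, Finset.mem_filter, Finset.mem_range]
            refine ⟨by omega, ?_⟩
            rw [hc]; exact hlab'
          exact ⟨⟨u.val, hmemu⟩, Sym2.eq_iff.mpr (Or.inl ⟨Fin.ext rfl, Fin.ext hc⟩)⟩
        · have hmemv : v.val ∈ s := by
            rw [hs, Finset.mem_filter, Finset.mem_range]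
            refine ⟨by omega, ?_⟩
            rw [hc, Nat.add_comm]
            exact hlab'
          exact ⟨⟨v.val, hmemv⟩, Sym2.eq_iff.mpr (Or.inr ⟨Fin.ext rfl, Fin.ext hc⟩)⟩
      · rintro ⟨⟨k, hk⟩, hFk⟩
        have hk' := hk
        rw [hs, Finset.mem_filter, Finset.mem_range] at hk'
        have hFk' : s((⟨k, by omega⟩ : Fin n), (⟨k+1, by omega⟩ : Fin n)) = s(u, v) := hFk
        refine ⟨?_, ?_⟩
        · rw [Sym2.eq_iff] at hFk'
          apply SimpleGraph.pathGraph_adj.mpr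
          rcases hFk' with ⟨h1, h2⟩ | ⟨h1, h2⟩
          · left; rw [← h1, ← h2]
          · right; rw [← h1, ← h2]
        · rw [← hFk']
          exact hk'.2
  have hinjF : Function.Injective F := by
    intro a b hab
    rw [hF] at hab
    simp only [Sym2.eq, Sym2.rel_iff', Prod.mk.injEq, Prod.swap_prod_mk, Fin.mk.injEq] at hab
    rcases hab with ⟨h1, _⟩ | ⟨h1, h2⟩
    · exact Subtype.ext h1
    · omega
  rw [eCount, hset, Set.ncard_coe_finset, Finset.card_image_of_injective _ hinjF,
    Finset.card_attach]
  rfl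


/-- every path graph on `n ≥ 1` vertices is Perrin cordial. -/
theorem pathGraph_isPerrinCordial (n : ℕ) (hn : 1 ≤ n) :
    IsPerrinCordial (SimpleGraph.pathGraph n) := by
  obtain ⟨g, hb, hinj, h0, h1⟩ := good_all n hn
  refine ⟨fun v => ⟨g v.val, by rw [Fintype.card_fin]; exact Nat.lt_succ_of_le (hb v.val v.isLt).2⟩,
    ?_, ?_⟩
  · intro a b hab
    simp only [Fin.mk.injEq] at hab
    exact Fin.ext (hinj a.val a.isLt b.val b.isLt hab)
  · have key : |(cnt g (n-1) 0 : ℤ) - (cnt g (n-1) 1 : ℤ)| ≤ 1 := by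
      rw [abs_le]
      constructor <;> omega
    simpa only [Fin.val_mk, eCount_path] using key
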